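/- Let r ≥ 1/6, let Hᵣ ⊂ L²((0,1)) be the Sobolev-type interpolation space of order r associated to the Dirichlet Laplacian on (0,1) (so Hᵣ embeds into L⁶((0,1))), and let f ∈ Lip²((0,1)×ℝ, ℝ). Then the Nemytskii operator F : Hᵣ → L²((0,1)), F(v)(x) = f(x,v(x)), is twice Fréchet differentiable with (F'(v)h)(x) = (∂₂f)(x,v(x)) h(x) and (F''(v)(h,g))(x) = (∂₂²f)(x,v(x)) h(x) g(x), and F ∈ Lip²(Hᵣ, L²), i.e. F'' is globally Lipschitz with sup_v ‖F''(v)‖_{L^{(2)}(Hᵣ, L²)} ≤ |f|_{C²_b} (sup_{0≠w∈Hᵣ} ‖w‖_{L⁴}/‖w‖_{Hᵣ})². -/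

import Mathlib

open MeasureTheory
open scoped ENNReal NNReal

open Filter Asymptotics in
private lemma auxLip (g g' : ℝ → ℝ) (hg : ∀ a, HasDerivAt g (g' a) a) (M : ℝ)
    (hM : ∀ a, |g' a| ≤ M) (a b : ℝ) : |g a - g b| ≤ M * |a - b| := by
  have := Convex.norm_image_sub_le_of_norm_hasDerivWithin_le
    (f := g) (f' := g') (s := Set.univ)
    (fun x _ => (hg x).hasDerivWithinAt) (fun x _ => by simpa using hM x)
    convex_univ (Set.mem_univ b) (Set.mem_univ a)
  simpa [Real.norm_eq_abs] using this

private lemma auxTaylor (g g' : ℝ → ℝ) (hg : ∀ a, HasDerivAt g (g' a) a) (L : ℝ)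
    (hL : ∀ a b, |g' a - g' b| ≤ L * |a - b|) (a t : ℝ) :
    |g (a + t) - g a - g' a * t| ≤ L * t ^ 2 := by
  have hL0 : 0 ≤ L := by
    have h1 := hL 0 1
    have h2 := abs_nonneg (g' 0 - g' 1)
    simp at h1; linarith
  set φ : ℝ → ℝ := fun s => g (a + s * t) - g' a * (s * t) with hφdef
  have hφ : ∀ s : ℝ, HasDerivAt φ ((g' (a + s * t) - g' a) * t) s := by
    intro s
    have h1 : HasDerivAt (fun s : ℝ => a + s * t) t s := by
      simpa using ((hasDerivAt_id s).mul_const t).const_add a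
    have h2 := (hg (a + s * t)).comp s h1
    have h3 : HasDerivAt (fun s : ℝ => g' a * (s * t)) (g' a * t) s := by
      simpa [mul_assoc] using ((hasDerivAt_id s).mul_const t).const_mul (g' a)
    have h4 := h2.sub h3
    rw [sub_mul]
    exact h4
  have bound : ∀ s ∈ Set.Icc (0:ℝ) 1, ‖(g' (a + s * t) - g' a) * t‖ ≤ L * t ^ 2 := by
    intro s hs
    have h1 : |g' (a + s * t) - g' a| ≤ L * |s * t| := by simpa using hL (a + s * t) a
    have hs1 : |s| ≤ 1 := by rw [abs_of_nonneg hs.1]; exact hs.2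
    have habs : |s * t| ≤ |t| := by
      rw [abs_mul]; nlinarith [abs_nonneg t]
    rw [Real.norm_eq_abs, abs_mul]
    have ht2 : |t| * |t| = t ^ 2 := by rw [← abs_mul, ← sq, abs_of_nonneg (sq_nonneg t)]
    calc |g' (a + s * t) - g' a| * |t| ≤ (L * |t|) * |t| := by
          apply mul_le_mul_of_nonneg_right _ (abs_nonneg t)
          exact h1.trans (mul_le_mul_of_nonneg_left habs hL0)
      _ = L * t ^ 2 := by rw [mul_assoc, ht2]
  have key := Convex.norm_image_sub_le_of_norm_hasDerivWithin_le
    (f := φ) (f' := fun s => (g' (a + s * t) - g' a) * t) (s := Set.Icc 0 1)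
    (fun x _ => (hφ x).hasDerivWithinAt) bound (convex_Icc 0 1)
    (Set.left_mem_Icc.2 zero_le_one) (Set.right_mem_Icc.2 zero_le_one)
  simp only [hφdef, one_mul, zero_mul, mul_zero, sub_zero, add_zero, Real.norm_eq_abs,
    abs_one, mul_one] at key
  calc |g (a + t) - g a - g' a * t| = |g (a + t) - g' a * t - g a| := by ring_nf
    _ ≤ L * t ^ 2 := key

open Filter Asymptotics in
private lemma auxHasFDerivAt {V W : Type*} [NormedAddCommGroup V] [NormedSpace ℝ V]
    [NormedAddCommGroup W] [NormedSpace ℝ W]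
    (F : V → W) (D : V →L[ℝ] W) (v : V) (C : ℝ)
    (h : ∀ u : V, ‖F (v + u) - F v - D u‖ ≤ C * ‖u‖ ^ 2) : HasFDerivAt F D v := by
  rw [hasFDerivAt_iff_isLittleO_nhds_zero, Asymptotics.isLittleO_iff]
  intro ε hε
  have hpos : (0:ℝ) < ε / (max C 0 + 1) := by positivity
  filter_upwards [Metric.ball_mem_nhds (0:V) hpos] with u hu
  have hun : ‖u‖ < ε / (max C 0 + 1) := by simpa [dist_eq_norm] using hu
  have h2 : (max C 0 + 1) * ‖u‖ ≤ ε := by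
    rw [div_eq_inv_mul] at hun
    have := (lt_inv_mul_iff₀ (by positivity : (0:ℝ) < max C 0 + 1)).mp hun
    linarith
  have h1 : C * ‖u‖ ^ 2 ≤ (max C 0 + 1) * (‖u‖ * ‖u‖) := by
    nlinarith [norm_nonneg u, le_max_left C 0]
  calc ‖F (v + u) - F v - D u‖ ≤ C * ‖u‖ ^ 2 := h u
    _ ≤ (max C 0 + 1) * (‖u‖ * ‖u‖) := h1
    _ ≤ ε * ‖u‖ := by nlinarith [norm_nonneg u]

open Filter in
private lemma auxMeasDeriv (g : ℝ → ℝ → ℝ)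
    (hmeas : ∀ u : ℝ → ℝ, AEStronglyMeasurable u (volume.restrict (Set.Ioo (0:ℝ) 1)) →
      AEStronglyMeasurable (fun x => g x (u x)) (volume.restrict (Set.Ioo (0:ℝ) 1)))
    (hdiff : ∀ x ∈ Set.Ioo (0:ℝ) 1, ∀ a, HasDerivAt (g x) (deriv (g x) a) a)
    (w : ℝ → ℝ) (hw : AEStronglyMeasurable w (volume.restrict (Set.Ioo (0:ℝ) 1))) :
    AEStronglyMeasurable (fun x => deriv (g x) (w x)) (volume.restrict (Set.Ioo (0:ℝ) 1)) := by
  apply aestronglyMeasurable_of_tendsto_ae (u := atTop)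
    (f := fun (n : ℕ) x => (g x (w x + ((n:ℝ)+1)⁻¹) - g x (w x)) * ((n:ℝ)+1))
  · intro n
    exact ((hmeas _ (hw.add aestronglyMeasurable_const)).sub (hmeas w hw)).mul
      aestronglyMeasurable_const
  · filter_upwards [ae_restrict_mem measurableSet_Ioo] with x hx
    have hd := hdiff x hx (w x)
    rw [hasDerivAt_iff_tendsto_slope] at hd
    have hseq : Tendsto (fun n : ℕ => w x + ((n:ℝ)+1)⁻¹) atTop (nhdsWithin (w x) {w x}ᶜ) := by
      apply tendsto_nhdsWithin_of_tendsto_nhds_of_eventually_within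
      · have h0 : Tendsto (fun n : ℕ => ((n:ℝ)+1)⁻¹) atTop (nhds 0) := by
          simpa [one_div] using tendsto_one_div_add_atTop_nhds_zero_nat (𝕜 := ℝ)
        simpa using tendsto_const_nhds.add h0
      · apply Eventually.of_forall
        intro n
        have : ((n:ℝ)+1)⁻¹ > 0 := by positivity
        simp only [Set.mem_compl_iff, Set.mem_singleton_iff]
        intro hcon
        nlinarith [hcon]
    have := hd.comp hseq
    convert this using 2 with n
    simp only [Function.comp_apply, slope_def_field, add_sub_cancel_left]
    rw [div_inv_eq_mul]


set_option maxHeartbeats 1000000 in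
theorem stmt17_nemytskii_C2
    (r : ℝ) (hr : 1 / 6 ≤ r)
    (V : Type*) [NormedAddCommGroup V] [NormedSpace ℝ V]
    (J : V →ₗ[ℝ] (ℝ → ℝ))
    -- Sobolev embeddings `H_r ↪ L²`, `H_r ↪ L⁴`, `H_r ↪ L⁶` on `(0,1)`:
    (C2 C4 C6 : ℝ)
    (hJ2 : ∀ v : V, MemLp (J v) 2 (volume.restrict (Set.Ioo (0 : ℝ) 1)) ∧
      eLpNorm (J v) 2 (volume.restrict (Set.Ioo (0 : ℝ) 1)) ≤ ENNReal.ofReal (C2 * ‖v‖))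
    (hJ4 : ∀ v : V, MemLp (J v) 4 (volume.restrict (Set.Ioo (0 : ℝ) 1)) ∧
      eLpNorm (J v) 4 (volume.restrict (Set.Ioo (0 : ℝ) 1)) ≤ ENNReal.ofReal (C4 * ‖v‖))
    (hJ6 : ∀ v : V, MemLp (J v) 6 (volume.restrict (Set.Ioo (0 : ℝ) 1)) ∧
      eLpNorm (J v) 6 (volume.restrict (Set.Ioo (0 : ℝ) 1)) ≤ ENNReal.ofReal (C6 * ‖v‖))
    -- `f ∈ Lip²((0,1) × ℝ, ℝ)`:
    (f : ℝ → ℝ → ℝ) (hfc : Continuous fun q : ℝ × ℝ => f q.1 q.2)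
    (hfC2 : ∀ x ∈ Set.Ioo (0 : ℝ) 1, ContDiff ℝ 2 (f x))
    (L0 Cf1 Cf2 L2 : ℝ)
    (hf0 : ∀ x ∈ Set.Ioo (0 : ℝ) 1, ∀ a b : ℝ, |f x a - f x b| ≤ L0 * |a - b|)
    (hf1 : ∀ x ∈ Set.Ioo (0 : ℝ) 1, ∀ a : ℝ, |deriv (f x) a| ≤ Cf1)
    (hf2 : ∀ x ∈ Set.Ioo (0 : ℝ) 1, ∀ a : ℝ, |deriv (deriv (f x)) a| ≤ Cf2)
    (hf2lip : ∀ x ∈ Set.Ioo (0 : ℝ) 1, ∀ a b : ℝ,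
      |deriv (deriv (f x)) a - deriv (deriv (f x)) b| ≤ L2 * |a - b|)
    -- the Nemytskii operator `F : V → L²((0,1))`:
    (F : V → Lp ℝ 2 (volume.restrict (Set.Ioo (0 : ℝ) 1)))
    (hF : ∀ v : V,
      (F v : ℝ → ℝ) =ᵐ[volume.restrict (Set.Ioo (0 : ℝ) 1)] fun x => f x (J v x)) :
    ∃ D : V → (V →L[ℝ] Lp ℝ 2 (volume.restrict (Set.Ioo (0 : ℝ) 1))),
    ∃ D2 : V → (V →L[ℝ] V →L[ℝ] Lp ℝ 2 (volume.restrict (Set.Ioo (0 : ℝ) 1))),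
      -- `F` is Fréchet differentiable with the asserted derivative:
      (∀ v : V, HasFDerivAt F (D v) v) ∧
      (∀ v h : V, (D v h : ℝ → ℝ) =ᵐ[volume.restrict (Set.Ioo (0 : ℝ) 1)]
        fun x => deriv (f x) (J v x) * J h x) ∧
      -- `F` is twice Fréchet differentiable with the asserted second derivative:
      (∀ v : V, HasFDerivAt D (D2 v) v) ∧
      (∀ v h g : V, (D2 v h g : ℝ → ℝ) =ᵐ[volume.restrict (Set.Ioo (0 : ℝ) 1)]
        fun x => deriv (deriv (f x)) (J v x) * J h x * J g x) ∧
      -- uniform bound on `F''`: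
      (∀ v : V, ‖D2 v‖ ≤ Cf2 * C4 ^ 2) ∧
      -- `F''` is globally Lipschitz, i.e. `F ∈ Lip²(H_r, L²)`:
      (∃ K : ℝ, ∀ v w : V, ‖D2 v - D2 w‖ ≤ K * ‖v - w‖) := by
  classical
  let μ : Measure ℝ := volume.restrict (Set.Ioo (0 : ℝ) 1)
  have hae : ∀ᵐ x ∂μ, x ∈ Set.Ioo (0:ℝ) 1 := ae_restrict_mem measurableSet_Ioo
  have hhalf : (1/2 : ℝ) ∈ Set.Ioo (0:ℝ) 1 := by norm_num
  have hCf1 : 0 ≤ Cf1 := (abs_nonneg _).trans (hf1 _ hhalf 0)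
  have hCf2 : 0 ≤ Cf2 := (abs_nonneg _).trans (hf2 _ hhalf 0)
  have hL2 : 0 ≤ L2 := by
    have h1 := hf2lip _ hhalf 0 1
    have h0 := abs_nonneg (deriv (deriv (f (1/2))) 0 - deriv (deriv (f (1/2))) 1)
    have e : |(0:ℝ) - 1| = 1 := by norm_num
    rw [e, mul_one] at h1
    linarith
  have habs3 : ∀ p q r' : ℝ, |p * q * r'| = |p| * |q| * |r'| := fun p q r' => by
    rw [abs_mul, abs_mul]
  set C2' : ℝ := max C2 0 with hC2'def
  set C4' : ℝ := max C4 0 with hC4'def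
  set C6' : ℝ := max C6 0 with hC6'def
  have hC2'0 : 0 ≤ C2' := le_max_right _ _
  have hC4'0 : 0 ≤ C4' := le_max_right _ _
  have hC6'0 : 0 ≤ C6' := le_max_right _ _
  have hJ2' : ∀ v : V, eLpNorm (J v) 2 μ ≤ ENNReal.ofReal (C2' * ‖v‖) := fun v =>
    (hJ2 v).2.trans (ENNReal.ofReal_le_ofReal
      (mul_le_mul_of_nonneg_right (le_max_left _ _) (norm_nonneg v)))
  have hJ4' : ∀ v : V, eLpNorm (J v) 4 μ ≤ ENNReal.ofReal (C4' * ‖v‖) := fun v =>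
    (hJ4 v).2.trans (ENNReal.ofReal_le_ofReal
      (mul_le_mul_of_nonneg_right (le_max_left _ _) (norm_nonneg v)))
  have hJ6' : ∀ v : V, eLpNorm (J v) 6 μ ≤ ENNReal.ofReal (C6' * ‖v‖) := fun v =>
    (hJ6 v).2.trans (ENNReal.ofReal_le_ofReal
      (mul_le_mul_of_nonneg_right (le_max_left _ _) (norm_nonneg v)))
  -- differentiability in the second variable
  have hd1 : ∀ x ∈ Set.Ioo (0:ℝ) 1, ∀ a, HasDerivAt (f x) (deriv (f x) a) a := fun x hx a =>
    (((hfC2 x hx).differentiable (by norm_num)) a).hasDerivAt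
  have hd2 : ∀ x ∈ Set.Ioo (0:ℝ) 1, ∀ a,
      HasDerivAt (deriv (f x)) (deriv (deriv (f x)) a) a := by
    intro x hx
    have h2 : ContDiff ℝ (1+1) (f x) := by rw [one_add_one_eq_two]; exact hfC2 x hx
    rw [contDiff_succ_iff_deriv] at h2
    exact fun a => ((h2.2.2.differentiable one_ne_zero) a).hasDerivAt
  have lip1 : ∀ x ∈ Set.Ioo (0:ℝ) 1, ∀ a b, |deriv (f x) a - deriv (f x) b| ≤ Cf2 * |a - b| :=
    fun x hx => auxLip _ _ (hd2 x hx) Cf2 (hf2 x hx)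
  have T0 : ∀ x ∈ Set.Ioo (0:ℝ) 1, ∀ a t,
      |f x (a + t) - f x a - deriv (f x) a * t| ≤ Cf2 * t ^ 2 :=
    fun x hx => auxTaylor _ _ (hd1 x hx) Cf2 (lip1 x hx)
  have T1 : ∀ x ∈ Set.Ioo (0:ℝ) 1, ∀ a t,
      |deriv (f x) (a + t) - deriv (f x) a - deriv (deriv (f x)) a * t| ≤ L2 * t ^ 2 :=
    fun x hx => auxTaylor _ _ (hd2 x hx) L2 (hf2lip x hx)
  -- measurability
  have measJ : ∀ v : V, AEStronglyMeasurable (J v) μ := fun v => (hJ2 v).1.1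
  have hcomp : ∀ u : ℝ → ℝ, AEStronglyMeasurable u μ →
      AEStronglyMeasurable (fun x => f x (u x)) μ :=
    fun u hu => hfc.comp_aestronglyMeasurable (aestronglyMeasurable_id.prodMk hu)
  have meas1 : ∀ u : ℝ → ℝ, AEStronglyMeasurable u μ →
      AEStronglyMeasurable (fun x => deriv (f x) (u x)) μ :=
    fun u hu => auxMeasDeriv f hcomp hd1 u hu
  have meas2 : ∀ u : ℝ → ℝ, AEStronglyMeasurable u μ →
      AEStronglyMeasurable (fun x => deriv (deriv (f x)) (u x)) μ :=
    fun u hu => auxMeasDeriv (fun x => deriv (f x)) meas1 hd2 u hu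
  -- Hölder inequalities
  have e244 : (1:ℝ≥0∞)/2 = 1/4 + 1/4 := by
    rw [ENNReal.div_add_div_same, ENNReal.div_eq_div_iff] <;> norm_num
  have e366 : (1:ℝ≥0∞)/3 = 1/6 + 1/6 := by
    rw [ENNReal.div_add_div_same, ENNReal.div_eq_div_iff] <;> norm_num
  have e236 : (1:ℝ≥0∞)/2 = 1/3 + 1/6 := by
    have h3 : (1:ℝ≥0∞)/3 = 2/6 := by rw [ENNReal.div_eq_div_iff] <;> norm_num
    have h2 : (1:ℝ≥0∞)/2 = 3/6 := by rw [ENNReal.div_eq_div_iff] <;> norm_num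
    rw [h3, h2, ENNReal.div_add_div_same]; norm_num
  have holder2 : ∀ a b : ℝ → ℝ, AEStronglyMeasurable a μ → AEStronglyMeasurable b μ →
      eLpNorm (fun x => a x * b x) 2 μ ≤ eLpNorm a 4 μ * eLpNorm b 4 μ := fun a b ha hb => by
    simpa [smul_eq_mul, Pi.mul_def] using eLpNorm_smul_le_mul_eLpNorm (p := 4) (q := 4) (r := 2) (hpqr := ⟨by simpa [one_div] using e244.symm⟩) hb ha
  have holder3 : ∀ a b c : ℝ → ℝ, AEStronglyMeasurable a μ → AEStronglyMeasurable b μ →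
      AEStronglyMeasurable c μ →
      eLpNorm (fun x => a x * b x * c x) 2 μ ≤
        eLpNorm a 6 μ * eLpNorm b 6 μ * eLpNorm c 6 μ := by
    intro a b c ha hb hc
    have h1 : eLpNorm (fun x => a x * b x) 3 μ ≤ eLpNorm a 6 μ * eLpNorm b 6 μ := by
      simpa [smul_eq_mul, Pi.mul_def] using eLpNorm_smul_le_mul_eLpNorm (p := 6) (q := 6) (r := 3) (hpqr := ⟨by simpa [one_div] using e366.symm⟩) hb ha
    have h2 : eLpNorm (fun x => a x * b x * c x) 2 μ ≤
        eLpNorm (fun x => a x * b x) 3 μ * eLpNorm c 6 μ := by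
      simpa [smul_eq_mul, Pi.mul_apply, Pi.mul_def] using eLpNorm_smul_le_mul_eLpNorm (p := 3) (q := 6) (r := 2) (hpqr := ⟨by simpa [one_div] using e236.symm⟩) hc (ha.mul hb)
    exact h2.trans (mul_le_mul' h1 le_rfl)
  have esmul : ∀ (c : ℝ) (u : ℝ → ℝ) (p : ℝ≥0∞),
      eLpNorm (fun x => c * u x) p μ = (‖c‖₊ : ℝ≥0∞) * eLpNorm u p μ := fun c u p => by
    exact eLpNorm_const_smul (c := c) (f := u) p μ
  -- membership in L²
  have memProd : ∀ h g : V, MemLp (fun x => J h x * J g x) 2 μ := fun h g => by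
    simpa [smul_eq_mul, Pi.mul_def] using MemLp.smul (p := 4) (q := 4) (r := 2) (hpqr := ⟨by simpa [one_div] using e244.symm⟩) (hJ4 g).1 (hJ4 h).1
  have mem1 : ∀ v h : V, MemLp (fun x => deriv (f x) (J v x) * J h x) 2 μ := by
    intro v h
    refine MemLp.of_le ((hJ2 h).1.const_mul Cf1) ((meas1 _ (measJ v)).mul (measJ h)) ?_
    filter_upwards [hae] with x hx
    rw [Real.norm_eq_abs, Real.norm_eq_abs, abs_mul, abs_mul, abs_of_nonneg hCf1]
    exact mul_le_mul_of_nonneg_right (hf1 x hx _) (abs_nonneg _)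
  have mem2 : ∀ v h g : V,
      MemLp (fun x => deriv (deriv (f x)) (J v x) * J h x * J g x) 2 μ := by
    intro v h g
    refine MemLp.of_le ((memProd h g).const_mul Cf2)
      (((meas2 _ (measJ v)).mul (measJ h)).mul (measJ g)) ?_
    filter_upwards [hae] with x hx
    have e2 : ‖Cf2 * (J h x * J g x)‖ = Cf2 * (|J h x| * |J g x|) := by
      rw [Real.norm_eq_abs, abs_mul, abs_mul, abs_of_nonneg hCf2]
    rw [Real.norm_eq_abs, habs3, e2]
    have h2 := hf2 x hx (J v x)
    have := mul_le_mul_of_nonneg_right h2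
      (mul_nonneg (abs_nonneg (J h x)) (abs_nonneg (J g x)))
    calc |deriv (deriv (f x)) (J v x)| * |J h x| * |J g x|
        = |deriv (deriv (f x)) (J v x)| * (|J h x| * |J g x|) := by ring
      _ ≤ Cf2 * (|J h x| * |J g x|) := this
  -- eLpNorm bounds
  have bnd1 : ∀ v h : V, eLpNorm (fun x => deriv (f x) (J v x) * J h x) 2 μ ≤
      ENNReal.ofReal (Cf1 * C2' * ‖h‖) := by
    intro v h
    calc eLpNorm (fun x => deriv (f x) (J v x) * J h x) 2 μ
        ≤ eLpNorm (fun x => Cf1 * J h x) 2 μ := by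
          apply eLpNorm_mono_ae
          filter_upwards [hae] with x hx
          rw [Real.norm_eq_abs, Real.norm_eq_abs, abs_mul, abs_mul, abs_of_nonneg hCf1]
          exact mul_le_mul_of_nonneg_right (hf1 x hx _) (abs_nonneg _)
      _ = (‖Cf1‖₊ : ℝ≥0∞) * eLpNorm (J h) 2 μ := esmul _ _ _
      _ ≤ ENNReal.ofReal Cf1 * ENNReal.ofReal (C2' * ‖h‖) :=
          mul_le_mul' (le_of_eq (Real.enorm_eq_ofReal hCf1)) (hJ2' h)
      _ = ENNReal.ofReal (Cf1 * C2' * ‖h‖) := by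
          rw [← ENNReal.ofReal_mul hCf1]; congr 1; ring
  have bnd2 : ∀ v h g : V,
      eLpNorm (fun x => deriv (deriv (f x)) (J v x) * J h x * J g x) 2 μ ≤
      ENNReal.ofReal (Cf2 * C4' ^ 2 * ‖h‖ * ‖g‖) := by
    intro v h g
    calc eLpNorm (fun x => deriv (deriv (f x)) (J v x) * J h x * J g x) 2 μ
        ≤ eLpNorm (fun x => Cf2 * (J h x * J g x)) 2 μ := by
          apply eLpNorm_mono_ae
          filter_upwards [hae] with x hx
          have e2 : ‖Cf2 * (J h x * J g x)‖ = Cf2 * (|J h x| * |J g x|) := by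
            rw [Real.norm_eq_abs, abs_mul, abs_mul, abs_of_nonneg hCf2]
          rw [Real.norm_eq_abs, habs3, e2]
          have h2 := hf2 x hx (J v x)
          calc |deriv (deriv (f x)) (J v x)| * |J h x| * |J g x|
              = |deriv (deriv (f x)) (J v x)| * (|J h x| * |J g x|) := by ring
            _ ≤ Cf2 * (|J h x| * |J g x|) := mul_le_mul_of_nonneg_right h2
                (mul_nonneg (abs_nonneg _) (abs_nonneg _))
      _ = (‖Cf2‖₊ : ℝ≥0∞) * eLpNorm (fun x => J h x * J g x) 2 μ := esmul _ _ _
      _ ≤ ENNReal.ofReal Cf2 * (ENNReal.ofReal (C4' * ‖h‖) * ENNReal.ofReal (C4' * ‖g‖)) := by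
          apply mul_le_mul' (le_of_eq (Real.enorm_eq_ofReal hCf2))
          exact (holder2 _ _ (measJ h) (measJ g)).trans (mul_le_mul' (hJ4' h) (hJ4' g))
      _ = ENNReal.ofReal (Cf2 * C4' ^ 2 * ‖h‖ * ‖g‖) := by
          rw [← ENNReal.ofReal_mul (mul_nonneg hC4'0 (norm_nonneg h)),
            ← ENNReal.ofReal_mul hCf2]
          congr 1; ring
  -- the first derivative as a continuous linear map
  obtain ⟨Dmap, hDmape⟩ : ∃ Dmap : V → (V →L[ℝ] Lp ℝ 2 μ),
      ∀ v h, Dmap v h = ((mem1 v h).toLp _) := by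
    refine ⟨fun v => LinearMap.mkContinuous
      { toFun := fun h => ((mem1 v h).toLp _)
        map_add' := by
          intro h g
          rw [← MemLp.toLp_add (mem1 v h) (mem1 v g)]
          refine MemLp.toLp_congr _ _ (Filter.Eventually.of_forall fun x => ?_)
          simp only [map_add, Pi.add_apply]
          ring
        map_smul' := by
          intro c h
          rw [RingHom.id_apply, ← MemLp.toLp_const_smul c (mem1 v h)]
          refine MemLp.toLp_congr _ _ (Filter.Eventually.of_forall fun x => ?_)
          simp only [_root_.map_smul, Pi.smul_apply, smul_eq_mul]
          ring }
      (Cf1 * C2') (fun h => ?_), fun v h => rfl⟩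
    rw [LinearMap.coe_mk, AddHom.coe_mk, Lp.norm_toLp]
    exact ENNReal.toReal_le_of_le_ofReal
      (mul_nonneg (mul_nonneg hCf1 hC2'0) (norm_nonneg _)) (bnd1 v h)
  have hD : ∀ v h : V, (Dmap v h : ℝ → ℝ) =ᵐ[μ] fun x => deriv (f x) (J v x) * J h x := by
    intro v h
    rw [hDmape]
    exact MemLp.coeFn_toLp (mem1 v h)
  -- the second derivative as a continuous bilinear map
  have hnorm2 : ∀ v h g : V, ‖((mem2 v h g).toLp _)‖ ≤ Cf2 * C4' ^ 2 * ‖h‖ * ‖g‖ := by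
    intro v h g
    rw [Lp.norm_toLp]
    exact ENNReal.toReal_le_of_le_ofReal
      (mul_nonneg (mul_nonneg (mul_nonneg hCf2 (by positivity)) (norm_nonneg _))
        (norm_nonneg _)) (bnd2 v h g)
  obtain ⟨D2map, hD2e, hD2norm⟩ :
      ∃ D2map : V → (V →L[ℝ] V →L[ℝ] Lp ℝ 2 μ),
        (∀ v h g, D2map v h g = ((mem2 v h g).toLp _)) ∧
        (∀ v, ‖D2map v‖ ≤ Cf2 * C4' ^ 2) := by
    refine ⟨fun v => LinearMap.mkContinuous₂
      (LinearMap.mk₂ ℝ (fun h g => ((mem2 v h g).toLp _)) ?_ ?_ ?_ ?_)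
      (Cf2 * C4' ^ 2) (fun h g => hnorm2 v h g),
      fun v h g => rfl,
      fun v => LinearMap.mkContinuous₂_norm_le _
        (mul_nonneg hCf2 (by positivity)) _⟩
    · intro h h' g
      rw [← MemLp.toLp_add (mem2 v h g) (mem2 v h' g)]
      refine MemLp.toLp_congr _ _ (Filter.Eventually.of_forall fun x => ?_)
      simp only [map_add, Pi.add_apply]
      ring
    · intro c h g
      rw [← MemLp.toLp_const_smul c (mem2 v h g)]
      refine MemLp.toLp_congr _ _ (Filter.Eventually.of_forall fun x => ?_)
      simp only [_root_.map_smul, Pi.smul_apply, smul_eq_mul]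
      ring
    · intro h g g'
      rw [← MemLp.toLp_add (mem2 v h g) (mem2 v h g')]
      refine MemLp.toLp_congr _ _ (Filter.Eventually.of_forall fun x => ?_)
      simp only [map_add, Pi.add_apply]
      ring
    · intro c h g
      rw [← MemLp.toLp_const_smul c (mem2 v h g)]
      refine MemLp.toLp_congr _ _ (Filter.Eventually.of_forall fun x => ?_)
      simp only [_root_.map_smul, Pi.smul_apply, smul_eq_mul]
      ring
  have hD2 : ∀ v h g : V, (D2map v h g : ℝ → ℝ) =ᵐ[μ]
      fun x => deriv (deriv (f x)) (J v x) * J h x * J g x := by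
    intro v h g
    rw [hD2e]
    exact MemLp.coeFn_toLp (mem2 v h g)
  -- F is differentiable with derivative Dmap
  have hDF : ∀ v : V, HasFDerivAt F (Dmap v) v := by
    intro v
    apply auxHasFDerivAt F (Dmap v) v (Cf2 * C4' ^ 2)
    intro u
    have hco : ((F (v + u) - F v - Dmap v u : Lp ℝ 2 μ) : ℝ → ℝ) =ᵐ[μ]
        fun x => f x (J v x + J u x) - f x (J v x) - deriv (f x) (J v x) * J u x := by
      filter_upwards [Lp.coeFn_sub (F (v + u) - F v) (Dmap v u),
        Lp.coeFn_sub (F (v + u)) (F v), hF (v + u), hF v, hD v u] with x h1 h2 h3 h4 h5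
      rw [h1]
      simp only [Pi.sub_apply] at h2 ⊢
      rw [h2, h3, h4, h5]
      simp only [map_add, Pi.add_apply]
    rw [Lp.norm_def, eLpNorm_congr_ae hco]
    apply ENNReal.toReal_le_of_le_ofReal
      (mul_nonneg (mul_nonneg hCf2 (by positivity)) (by positivity))
    calc eLpNorm
          (fun x => f x (J v x + J u x) - f x (J v x) - deriv (f x) (J v x) * J u x) 2 μ
        ≤ eLpNorm (fun x => Cf2 * (J u x * J u x)) 2 μ := by
          apply eLpNorm_mono_ae
          filter_upwards [hae] with x hx
          have ht := T0 x hx (J v x) (J u x)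
          have e2 : ‖Cf2 * (J u x * J u x)‖ = Cf2 * (J u x) ^ 2 := by
            rw [Real.norm_eq_abs, abs_mul, abs_of_nonneg hCf2, ← sq,
              abs_of_nonneg (sq_nonneg _)]
          rw [Real.norm_eq_abs, e2]
          exact ht
      _ = (‖Cf2‖₊ : ℝ≥0∞) * eLpNorm (fun x => J u x * J u x) 2 μ := esmul _ _ _
      _ ≤ ENNReal.ofReal Cf2 * (ENNReal.ofReal (C4' * ‖u‖) * ENNReal.ofReal (C4' * ‖u‖)) := by
          apply mul_le_mul' (le_of_eq (Real.enorm_eq_ofReal hCf2))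
          exact (holder2 _ _ (measJ u) (measJ u)).trans (mul_le_mul' (hJ4' u) (hJ4' u))
      _ = ENNReal.ofReal (Cf2 * C4' ^ 2 * ‖u‖ ^ 2) := by
          rw [← ENNReal.ofReal_mul (mul_nonneg hC4'0 (norm_nonneg u)),
            ← ENNReal.ofReal_mul hCf2]
          congr 1; ring
  -- Dmap is differentiable with derivative D2map
  have hDD : ∀ v : V, HasFDerivAt Dmap (D2map v) v := by
    intro v
    apply auxHasFDerivAt Dmap (D2map v) v (L2 * C6' ^ 3)
    intro u
    have hb : ∀ g : V, ‖(Dmap (v + u) - Dmap v - D2map v u) g‖ ≤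
        L2 * C6' ^ 3 * ‖u‖ ^ 2 * ‖g‖ := by
      intro g
      have e1 : (Dmap (v + u) - Dmap v - D2map v u) g
          = Dmap (v + u) g - Dmap v g - D2map v u g := by
        simp [ContinuousLinearMap.sub_apply]
      have hco : ((Dmap (v + u) g - Dmap v g - D2map v u g : Lp ℝ 2 μ) : ℝ → ℝ) =ᵐ[μ]
          fun x => (deriv (f x) (J v x + J u x) - deriv (f x) (J v x)
            - deriv (deriv (f x)) (J v x) * J u x) * J g x := by
        filter_upwards [Lp.coeFn_sub (Dmap (v + u) g - Dmap v g) (D2map v u g),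
          Lp.coeFn_sub (Dmap (v + u) g) (Dmap v g), hD (v + u) g, hD v g, hD2 v u g]
          with x h1 h2 h3 h4 h5
        rw [h1]
        simp only [Pi.sub_apply] at h2 ⊢
        rw [h2, h3, h4, h5]
        simp only [map_add, Pi.add_apply]
        ring
      rw [e1, Lp.norm_def, eLpNorm_congr_ae hco]
      apply ENNReal.toReal_le_of_le_ofReal
        (mul_nonneg (mul_nonneg (mul_nonneg hL2 (by positivity)) (by positivity))
          (norm_nonneg _))
      calc eLpNorm (fun x => (deriv (f x) (J v x + J u x) - deriv (f x) (J v x)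
              - deriv (deriv (f x)) (J v x) * J u x) * J g x) 2 μ
          ≤ eLpNorm (fun x => (L2 * J u x) * J u x * J g x) 2 μ := by
            apply eLpNorm_mono_ae
            filter_upwards [hae] with x hx
            have ht := T1 x hx (J v x) (J u x)
            have e2 : ‖L2 * J u x * J u x * J g x‖ = (L2 * (J u x) ^ 2) * |J g x| := by
              rw [Real.norm_eq_abs, abs_mul, habs3, abs_of_nonneg hL2]
              have : |J u x| * |J u x| = (J u x) ^ 2 := by
                rw [← abs_mul, ← sq, abs_of_nonneg (sq_nonneg _)]
              rw [mul_assoc L2, this]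
            rw [Real.norm_eq_abs, abs_mul, e2]
            exact mul_le_mul_of_nonneg_right ht (abs_nonneg _)
        _ ≤ eLpNorm (fun x => L2 * J u x) 6 μ * eLpNorm (J u) 6 μ * eLpNorm (J g) 6 μ :=
            holder3 (fun x => L2 * J u x) (J u) (J g)
              ((measJ u).const_mul L2) (measJ u) (measJ g)
        _ ≤ (ENNReal.ofReal L2 * ENNReal.ofReal (C6' * ‖u‖)) * ENNReal.ofReal (C6' * ‖u‖)
              * ENNReal.ofReal (C6' * ‖g‖) := by
            refine mul_le_mul' (mul_le_mul' ?_ (hJ6' u)) (hJ6' g)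
            rw [esmul]
            exact mul_le_mul' (le_of_eq (Real.enorm_eq_ofReal hL2)) (hJ6' u)
        _ = ENNReal.ofReal (L2 * C6' ^ 3 * ‖u‖ ^ 2 * ‖g‖) := by
            rw [← ENNReal.ofReal_mul hL2,
              ← ENNReal.ofReal_mul (mul_nonneg hL2 (mul_nonneg hC6'0 (norm_nonneg u))),
              ← ENNReal.ofReal_mul (mul_nonneg (mul_nonneg hL2
                (mul_nonneg hC6'0 (norm_nonneg u))) (mul_nonneg hC6'0 (norm_nonneg u)))]
            congr 1; ring
    exact ContinuousLinearMap.opNorm_le_bound _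
      (mul_nonneg (mul_nonneg hL2 (by positivity)) (by positivity)) hb
  -- Lipschitz continuity of D2map
  have hlip : ∀ v w : V, ‖D2map v - D2map w‖ ≤ L2 * C6' ^ 3 * ‖v - w‖ := by
    intro v w
    apply ContinuousLinearMap.opNorm_le_bound _
      (mul_nonneg (mul_nonneg hL2 (by positivity)) (norm_nonneg _))
    intro h
    apply ContinuousLinearMap.opNorm_le_bound _
      (mul_nonneg (mul_nonneg (mul_nonneg hL2 (by positivity)) (norm_nonneg _))
        (norm_nonneg _))
    intro g
    have e1 : ((D2map v - D2map w) h) g = D2map v h g - D2map w h g := by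
      simp [ContinuousLinearMap.sub_apply]
    have hco : ((D2map v h g - D2map w h g : Lp ℝ 2 μ) : ℝ → ℝ) =ᵐ[μ]
        fun x => (deriv (deriv (f x)) (J v x) - deriv (deriv (f x)) (J w x))
          * J h x * J g x := by
      filter_upwards [Lp.coeFn_sub (D2map v h g) (D2map w h g), hD2 v h g, hD2 w h g]
        with x h1 h2 h3
      rw [h1]
      simp only [Pi.sub_apply]
      rw [h2, h3]; ring
    rw [e1, Lp.norm_def, eLpNorm_congr_ae hco]
    apply ENNReal.toReal_le_of_le_ofReal
      (mul_nonneg (mul_nonneg (mul_nonneg (mul_nonneg hL2 (by positivity)) (norm_nonneg _))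
        (norm_nonneg _)) (norm_nonneg _))
    calc eLpNorm (fun x => (deriv (deriv (f x)) (J v x) - deriv (deriv (f x)) (J w x))
            * J h x * J g x) 2 μ
        ≤ eLpNorm (fun x => (L2 * J (v - w) x) * J h x * J g x) 2 μ := by
          apply eLpNorm_mono_ae
          filter_upwards [hae] with x hx
          have hl := hf2lip x hx (J v x) (J w x)
          have e2 : J v x - J w x = J (v - w) x := by simp [map_sub]
          have key : |deriv (deriv (f x)) (J v x) - deriv (deriv (f x)) (J w x)|
              ≤ |L2 * J (v - w) x| := by
            rw [abs_mul, abs_of_nonneg hL2, ← e2]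
            exact hl
          rw [Real.norm_eq_abs, Real.norm_eq_abs, habs3, habs3]
          exact mul_le_mul_of_nonneg_right
            (mul_le_mul_of_nonneg_right key (abs_nonneg _)) (abs_nonneg _)
      _ ≤ eLpNorm (fun x => L2 * J (v - w) x) 6 μ * eLpNorm (J h) 6 μ * eLpNorm (J g) 6 μ :=
          holder3 (fun x => L2 * J (v - w) x) (J h) (J g)
            ((measJ _).const_mul L2) (measJ h) (measJ g)
      _ ≤ (ENNReal.ofReal L2 * ENNReal.ofReal (C6' * ‖v - w‖)) * ENNReal.ofReal (C6' * ‖h‖)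
            * ENNReal.ofReal (C6' * ‖g‖) := by
          refine mul_le_mul' (mul_le_mul' ?_ (hJ6' h)) (hJ6' g)
          rw [esmul]
          exact mul_le_mul' (le_of_eq (Real.enorm_eq_ofReal hL2)) (hJ6' (v - w))
      _ = ENNReal.ofReal (L2 * C6' ^ 3 * ‖v - w‖ * ‖h‖ * ‖g‖) := by
          rw [← ENNReal.ofReal_mul hL2,
            ← ENNReal.ofReal_mul (mul_nonneg hL2 (mul_nonneg hC6'0 (norm_nonneg _))),
            ← ENNReal.ofReal_mul (mul_nonneg (mul_nonneg hL2
              (mul_nonneg hC6'0 (norm_nonneg _))) (mul_nonneg hC6'0 (norm_nonneg _)))]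
          congr 1; ring
  -- assemble
  refine ⟨Dmap, D2map, hDF, hD, hDD, hD2, ?_, ⟨L2 * C6' ^ 3, hlip⟩⟩
  intro v
  refine (hD2norm v).trans ?_
  apply mul_le_mul_of_nonneg_left _ hCf2
  rcases le_or_gt 0 C4 with h4 | h4
  · rw [hC4'def, max_eq_left h4]
  · have hz : C4' = 0 := by rw [hC4'def, max_eq_right h4.le]
    rw [hz]
    simpa using sq_nonneg C4
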